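/- Let W be real symmetric positive definite and T real symmetric invertible, with λ_max the largest eigenvalue of W and μ_min the smallest modulus of an eigenvalue of T. If λ_max ≤ μ_min, then for every α > 0 the spectral radius of the LHSS iteration matrix G(α) = i·T⁻¹W(αI+W)⁻¹(αI−iT) is strictly less than 1. -/

import Mathlib

open Matrix

/-- Spectral radius of a complex matrix: supremum of moduli of its eigenvalues. -/
noncomputable def specRad {n : ℕ} (M : Matrix (Fin n) (Fin n) ℂ) : ℝ :=
  sSup {r : ℝ | ∃ μ ∈ spectrum ℂ M, r = ‖μ‖}

namespace LHSSAux

variable {n : ℕ}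

lemma det_map_ofReal (X : Matrix (Fin n) (Fin n) ℝ) :
    (X.map Complex.ofReal).det = Complex.ofReal X.det :=
  ((Complex.ofRealHom : ℝ →+* ℂ).map_det X).symm

lemma mem_spectrum_map_iff (M : Matrix (Fin n) (Fin n) ℝ) (r : ℝ) :
    r ∈ spectrum ℝ (M.map Complex.ofReal) ↔ r ∈ spectrum ℝ M := by
  rw [spectrum.mem_iff, spectrum.mem_iff]
  have h1 : algebraMap ℝ (Matrix (Fin n) (Fin n) ℂ) r - M.map Complex.ofReal
      = ((algebraMap ℝ (Matrix (Fin n) (Fin n) ℝ) r) - M).map Complex.ofReal := by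
    ext i j
    simp [Matrix.algebraMap_matrix_apply, apply_ite]
  rw [h1, Matrix.isUnit_iff_isUnit_det, Matrix.isUnit_iff_isUnit_det, det_map_ofReal]
  simp [isUnit_iff_ne_zero]

lemma isUnit_det_map_of (M : Matrix (Fin n) (Fin n) ℝ) (h : IsUnit M) :
    IsUnit (M.map Complex.ofReal).det := by
  rw [Matrix.isUnit_iff_isUnit_det] at h
  rw [det_map_ofReal]
  simpa [isUnit_iff_ne_zero] using h

lemma spectrum_pos_of_posDef {W : Matrix (Fin n) (Fin n) ℝ} (hW : W.PosDef)
    {x : ℝ} (hx : x ∈ spectrum ℝ W) : 0 < x := by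
  rw [spectrum.mem_iff] at hx
  rw [Matrix.isUnit_iff_isUnit_det, isUnit_iff_ne_zero, not_ne_iff] at hx
  obtain ⟨v, hv, hv0⟩ := (Matrix.exists_mulVec_eq_zero_iff).2 hx
  have hWv : W *ᵥ v = x • v := by
    rw [Matrix.sub_mulVec] at hv0
    have h1 : (algebraMap ℝ (Matrix (Fin n) (Fin n) ℝ) x) *ᵥ v = x • v := by
      simp [Algebra.algebraMap_eq_smul_one, Matrix.smul_mulVec]
    rw [h1, sub_eq_zero] at hv0
    exact hv0.symm
  have h2 := hW.dotProduct_mulVec_pos hv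
  rw [hWv] at h2
  have h3 : star v = v := by simp
  rw [h3, dotProduct_smul] at h2
  have h4 : (0:ℝ) < v ⬝ᵥ v := by
    have := Matrix.dotProduct_star_self_pos_iff (v := v) (R := ℝ)
    rw [h3] at this
    exact this.2 hv
  rw [smul_eq_mul] at h2
  nlinarith

lemma quad_conj (V M : Matrix (Fin n) (Fin n) ℂ) (z : Fin n → ℂ) :
    star z ⬝ᵥ ((V * M * star V) *ᵥ z)
      = star (star V *ᵥ z) ⬝ᵥ (M *ᵥ (star V *ᵥ z)) := by
  have h1 : star (star V *ᵥ z) = star z ᵥ* V := by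
    rw [Matrix.star_mulVec, ← Matrix.star_eq_conjTranspose, star_star]
  rw [h1, ← Matrix.dotProduct_mulVec, ← Matrix.mulVec_mulVec, ← Matrix.mulVec_mulVec]

lemma diag_quad (f : Fin n → ℂ) (w : Fin n → ℂ) :
    star w ⬝ᵥ (diagonal f *ᵥ w) = ∑ j, f j * (Complex.normSq (w j) : ℂ) := by
  simp only [dotProduct, Matrix.mulVec_diagonal, Pi.star_apply]
  refine Finset.sum_congr rfl fun j _ => ?_
  simp only [Complex.star_def]
  rw [show (starRingEnd ℂ) (w j) * (f j * w j) = f j * ((starRingEnd ℂ) (w j) * w j) by ring,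
    ← Complex.normSq_eq_conj_mul_self]

lemma conj_mul {U : Matrix (Fin n) (Fin n) ℂ} (hU : star U * U = 1)
    (X Y : Matrix (Fin n) (Fin n) ℂ) :
    (U * X * star U) * (U * Y * star U) = U * (X * Y) * star U := by
  calc (U * X * star U) * (U * Y * star U)
      = U * (X * ((star U * U) * (Y * star U))) := by simp only [mul_assoc]
    _ = U * (X * Y) * star U := by rw [hU, one_mul]; simp only [mul_assoc]

lemma specRad_lt_one {M : Matrix (Fin n) (Fin n) ℂ}
    (h : ∀ μ ∈ spectrum ℂ M, ‖μ‖ < 1) :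
    specRad M < 1 := by
  rw [specRad]
  set s : Set ℝ := {r : ℝ | ∃ μ ∈ spectrum ℂ M, r = ‖μ‖}
  have hfin : s.Finite := by
    have hsub : s ⊆ (fun z : ℂ => ‖z‖) '' (spectrum ℂ M) := by
      rintro r ⟨μ, hμ, rfl⟩; exact ⟨μ, hμ, rfl⟩
    exact Set.Finite.subset ((Matrix.finite_spectrum M).image _) hsub
  rcases Set.eq_empty_or_nonempty s with he | hne
  · rw [he, Real.sSup_empty]; norm_num
  · obtain ⟨μ, hμ, hr⟩ := hne.csSup_mem hfin
    rw [hr]; exact h μ hμ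

end LHSSAux

set_option maxHeartbeats 1000000 in
theorem stmt_6 {n : ℕ} (W T : Matrix (Fin n) (Fin n) ℝ)
    (hW : W.PosDef) (hT : T.IsSymm) (hTinv : IsUnit T)
    (lamMax muMin : ℝ)
    (hlam_mem : lamMax ∈ spectrum ℝ W)
    (hlam_max : ∀ x ∈ spectrum ℝ W, x ≤ lamMax)
    (hmu_mem : ∃ x ∈ spectrum ℝ T, |x| = muMin)
    (hmu_min : ∀ x ∈ spectrum ℝ T, muMin ≤ |x|)
    (hle : lamMax ≤ muMin) :
    ∀ α : ℝ, 0 < α →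
      specRad (Complex.I •
          ((T.map Complex.ofReal)⁻¹ * (W.map Complex.ofReal) *
            ((α : ℂ) • (1 : Matrix (Fin n) (Fin n) ℂ) + W.map Complex.ofReal)⁻¹ *
            ((α : ℂ) • (1 : Matrix (Fin n) (Fin n) ℂ) -
              Complex.I • T.map Complex.ofReal))) < 1 := by
  intro α hα
  open LHSSAux in
  apply LHSSAux.specRad_lt_one
  intro μ hμ
  -- trivial case
  rcases eq_or_ne μ 0 with rfl | hμ0
  · simpa using (one_pos : (0:ℝ) < 1)
  set Wc := W.map Complex.ofReal with hWc_def
  set Tc := T.map Complex.ofReal with hTc_def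
  -- basic scalar facts
  have hlam_pos : 0 < lamMax := LHSSAux.spectrum_pos_of_posDef hW hlam_mem
  have hmu_pos : 0 < muMin := by
    obtain ⟨x0, hx0, hx0e⟩ := hmu_mem
    have hx0ne : x0 ≠ 0 := by
      rintro rfl
      rw [spectrum.mem_iff] at hx0
      exact hx0 (by simpa using hTinv.neg)
    rw [← hx0e]
    exact abs_pos.2 hx0ne
  -- Hermitian complexifications
  have hWcH : Wc.IsHermitian := by
    ext i j
    have h1 := congrFun (congrFun hW.1 i) j
    simp only [Matrix.conjTranspose_apply] at h1 ⊢
    rw [hWc_def]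
    simp only [Matrix.map_apply, Complex.star_def, Complex.conj_ofReal]
    exact_mod_cast congrArg Complex.ofReal h1
  have hTcH : Tc.IsHermitian := by
    ext i j
    simp only [Matrix.conjTranspose_apply]
    rw [hTc_def]
    simp only [Matrix.map_apply, Complex.star_def, Complex.conj_ofReal]
    exact_mod_cast congrArg Complex.ofReal (hT.apply i j)
  -- spectral data of Wc
  set U : Matrix (Fin n) (Fin n) ℂ := (hWcH.eigenvectorUnitary : Matrix (Fin n) (Fin n) ℂ)
    with hU_def
  set d : Fin n → ℝ := hWcH.eigenvalues with hd_def
  have hUU : U * star U = 1 := Matrix.mem_unitaryGroup_iff.mp hWcH.eigenvectorUnitary.2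
  have hU'U : star U * U = 1 := Matrix.mem_unitaryGroup_iff'.mp hWcH.eigenvectorUnitary.2
  have hWdec : Wc = U * diagonal (fun j => (d j : ℂ)) * star U := by
    have := hWcH.spectral_theorem
    rw [Unitary.conjStarAlgAut_apply] at this
    exact this
  have hd_spec : ∀ j, d j ∈ spectrum ℝ W := fun j =>
    (LHSSAux.mem_spectrum_map_iff W _).1 (hWcH.eigenvalues_mem_spectrum_real j)
  have hd_pos : ∀ j, 0 < d j := fun j => LHSSAux.spectrum_pos_of_posDef hW (hd_spec j)
  have hd_le : ∀ j, d j ≤ lamMax := fun j => hlam_max _ (hd_spec j)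
  have had_pos : ∀ j, 0 < α + d j := fun j => by linarith [hd_pos j]
  have had_ne : ∀ j, ((α : ℂ) + (d j : ℂ)) ≠ 0 := fun j => by
    rw [show ((α : ℂ) + (d j : ℂ)) = ((α + d j : ℝ) : ℂ) by push_cast; ring]
    exact_mod_cast (had_pos j).ne'
  -- spectral data of Tc
  set V : Matrix (Fin n) (Fin n) ℂ := (hTcH.eigenvectorUnitary : Matrix (Fin n) (Fin n) ℂ)
    with hV_def
  set t : Fin n → ℝ := hTcH.eigenvalues with ht_def
  have hVV : V * star V = 1 := Matrix.mem_unitaryGroup_iff.mp hTcH.eigenvectorUnitary.2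
  have hV'V : star V * V = 1 := Matrix.mem_unitaryGroup_iff'.mp hTcH.eigenvectorUnitary.2
  have hTdec : Tc = V * diagonal (fun j => (t j : ℂ)) * star V := by
    have := hTcH.spectral_theorem
    rw [Unitary.conjStarAlgAut_apply] at this
    exact this
  have ht_spec : ∀ j, t j ∈ spectrum ℝ T := fun j =>
    (LHSSAux.mem_spectrum_map_iff T _).1 (hTcH.eigenvalues_mem_spectrum_real j)
  have ht_ge : ∀ j, muMin ≤ |t j| := fun j => hmu_min _ (ht_spec j)
  have ht_ne : ∀ j, t j ≠ 0 := fun j => by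
    intro h
    have := ht_ge j
    rw [h] at this
    simp at this
    linarith [hmu_pos, this]
  -- the matrix A and its inverse
  set A : Matrix (Fin n) (Fin n) ℂ := (α : ℂ) • 1 + Wc with hA_def
  have hAdec : A = U * diagonal (fun j => (α : ℂ) + (d j : ℂ)) * star U := by
    rw [hA_def, hWdec]
    have h1 : (α : ℂ) • (1 : Matrix (Fin n) (Fin n) ℂ) = U * ((α : ℂ) • 1) * star U := by
      rw [Matrix.mul_smul, Matrix.smul_mul, mul_one, hUU]
    rw [h1]
    have h2 : U * ((α:ℂ) • 1) * star U + U * diagonal (fun j => (d j : ℂ)) * star U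
        = U * ((α:ℂ) • 1 + diagonal (fun j => (d j : ℂ))) * star U := by
      rw [Matrix.mul_add, Matrix.add_mul]
    rw [h2]
    congr 2
    ext i j
    by_cases h : i = j <;> simp [Matrix.diagonal_apply, Matrix.one_apply, h]
  have hAinv : A⁻¹ = U * diagonal (fun j => ((α : ℂ) + (d j : ℂ))⁻¹) * star U := by
    apply Matrix.inv_eq_right_inv
    rw [hAdec, LHSSAux.conj_mul hU'U, Matrix.diagonal_mul_diagonal]
    have : (fun j => ((α : ℂ) + (d j : ℂ)) * ((α : ℂ) + (d j : ℂ))⁻¹)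
        = fun _ => (1 : ℂ) := by
      funext j; exact mul_inv_cancel₀ (had_ne j)
    rw [this, Matrix.diagonal_one, mul_one, hUU]
  -- the square root B of Wc * A⁻¹
  set g : Fin n → ℝ := fun j => d j / (α + d j) with hg_def
  set B : Matrix (Fin n) (Fin n) ℂ :=
    U * diagonal (fun j => (Real.sqrt (g j) : ℂ)) * star U with hB_def
  have hBH : B.IsHermitian := by
    rw [hB_def, Matrix.star_eq_conjTranspose]
    apply Matrix.isHermitian_mul_mul_conjTranspose
    apply Matrix.isHermitian_diagonal_of_self_adjoint
    funext j
    simp [Complex.star_def, Complex.conj_ofReal]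
  have hBB : B * B = U * diagonal (fun j => (g j : ℂ)) * star U := by
    rw [hB_def, LHSSAux.conj_mul hU'U, Matrix.diagonal_mul_diagonal]
    have hfun : (fun i => (Real.sqrt (g i) : ℂ) * (Real.sqrt (g i) : ℂ))
        = fun j => ((g j : ℝ) : ℂ) := by
      funext j
      rw [← Complex.ofReal_mul, Real.mul_self_sqrt (le_of_lt (div_pos (hd_pos j) (had_pos j)))]
    rw [hfun]
  have hS : Wc * A⁻¹ = B * B := by
    rw [hBB, hWdec, hAinv, LHSSAux.conj_mul hU'U, Matrix.diagonal_mul_diagonal]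
    have hfun : (fun i => (d i : ℂ) * ((α:ℂ) + (d i:ℂ))⁻¹)
        = fun j => ((g j : ℝ) : ℂ) := by
      funext j
      rw [hg_def]
      push_cast
      rw [div_eq_mul_inv]
    rw [hfun]
  -- Tc inverse
  have hdetT : IsUnit Tc.det := LHSSAux.isUnit_det_map_of T hTinv
  have hT1 : Tc * Tc⁻¹ = 1 := Matrix.mul_nonsing_inv _ hdetT
  have htc_ne : ∀ j, ((t j : ℝ) : ℂ) ≠ 0 := fun j => by exact_mod_cast ht_ne j
  have hTinvDec : Tc⁻¹ = V * diagonal (fun j => ((t j : ℝ) : ℂ)⁻¹) * star V := by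
    apply Matrix.inv_eq_right_inv
    rw [hTdec, LHSSAux.conj_mul hV'V, Matrix.diagonal_mul_diagonal]
    have hfun : (fun i => ((t i:ℝ):ℂ) * ((t i:ℝ):ℂ)⁻¹) = fun _ => (1:ℂ) := by
      funext j; exact mul_inv_cancel₀ (htc_ne j)
    rw [hfun, Matrix.diagonal_one, mul_one, hVV]
  -- rewrite the iteration matrix
  set c : ℂ := Complex.I * (α : ℂ) with hc_def
  set E : Matrix (Fin n) (Fin n) ℂ := 1 + c • Tc⁻¹ with hE_def
  set H : Matrix (Fin n) (Fin n) ℂ := B * B + c • (B * Tc⁻¹ * B) with hH_def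
  have hM : Complex.I • (Tc⁻¹ * Wc * A⁻¹ * ((α:ℂ) • 1 - Complex.I • Tc))
      = Tc⁻¹ * (Wc * A⁻¹ * (c • 1 + Tc)) := by
    have h1 : Complex.I • ((α:ℂ) • (1 : Matrix (Fin n) (Fin n) ℂ) - Complex.I • Tc)
        = c • 1 + Tc := by
      rw [smul_sub, smul_smul, smul_smul, hc_def]
      rw [show Complex.I * Complex.I = -1 by
        rw [Complex.I_mul_I]]
      rw [neg_one_smul, sub_neg_eq_add]
    rw [← h1, ← Matrix.mul_smul]
    simp only [Matrix.mul_assoc]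
  -- spectrum chase
  have hmem : μ ∈ spectrum ℂ H := by
    rw [hM] at hμ
    have h1 : μ ∈ spectrum ℂ (Tc⁻¹ * (Wc * A⁻¹ * (c • 1 + Tc))) \ {0} := ⟨hμ, hμ0⟩
    rw [spectrum.nonzero_mul_comm] at h1
    have h2 : Wc * A⁻¹ * (c • 1 + Tc) * Tc⁻¹ = B * (B * E) := by
      rw [Matrix.mul_assoc (Wc * A⁻¹), Matrix.add_mul, Matrix.smul_mul, one_mul, hT1]
      rw [hS, hE_def, Matrix.mul_add, mul_one, Matrix.mul_smul]
      rw [Matrix.mul_add, Matrix.mul_add, Matrix.mul_smul, Matrix.mul_assoc]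
      simp only [Matrix.mul_smul, mul_one]
      exact add_comm _ _
    rw [h2] at h1
    rw [spectrum.nonzero_mul_comm] at h1
    have h3 : B * E * B = H := by
      rw [hE_def, hH_def, Matrix.mul_add, mul_one, Matrix.add_mul, Matrix.mul_smul,
        Matrix.smul_mul, Matrix.mul_assoc]
    rw [h3] at h1
    exact h1.1
  -- eigenvector
  obtain ⟨x, hx0, hxe⟩ : ∃ x ≠ 0, H *ᵥ x = μ • x := by
    rw [spectrum.mem_iff, Algebra.algebraMap_eq_smul_one, Matrix.isUnit_iff_isUnit_det,
      isUnit_iff_ne_zero, not_ne_iff] at hmem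
    obtain ⟨v, hv, hv0⟩ := Matrix.exists_mulVec_eq_zero_iff.2 hmem
    refine ⟨v, hv, ?_⟩
    rw [Matrix.sub_mulVec, Matrix.smul_mulVec, Matrix.one_mulVec, sub_eq_zero] at hv0
    exact hv0.symm
  have dot_self : ∀ v : Fin n → ℂ,
      star v ⬝ᵥ v = ((∑ i, Complex.normSq (v i) : ℝ) : ℂ) := by
    intro v
    rw [dotProduct, Complex.ofReal_sum]
    refine Finset.sum_congr rfl fun i _ => ?_
    simp only [Pi.star_apply, Complex.star_def]
    rw [← Complex.normSq_eq_conj_mul_self]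
  set u : Fin n → ℂ := star U *ᵥ x with hu_def
  set z : Fin n → ℂ := B *ᵥ x with hz_def
  set w : Fin n → ℂ := star V *ᵥ z with hw_def
  set Nr : ℝ := ∑ i, Complex.normSq (x i) with hNr_def
  set pr : ℝ := ∑ j, g j * Complex.normSq (u j) with hpr_def
  set pr2 : ℝ := ∑ j, Complex.normSq (w j) with hpr2_def
  set qr : ℝ := ∑ j, (t j)⁻¹ * Complex.normSq (w j) with hqr_def
  -- quadratic form identities
  have hxx : star x ⬝ᵥ x = (Nr : ℂ) := dot_self x
  have hPx : star x ⬝ᵥ ((B * B) *ᵥ x) = (pr : ℂ) := by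
    rw [hBB, LHSSAux.quad_conj, LHSSAux.diag_quad]
    rw [hpr_def, Complex.ofReal_sum]
    push_cast
    rfl
  have hstarz : star z = star x ᵥ* B := by
    rw [hz_def, Matrix.star_mulVec, hBH.eq]
  have hzz : star z ⬝ᵥ z = star x ⬝ᵥ ((B * B) *ᵥ x) := by
    rw [hstarz, ← Matrix.dotProduct_mulVec, hz_def, Matrix.mulVec_mulVec]
  have hww : star w ⬝ᵥ w = star z ⬝ᵥ z := by
    have h1 := LHSSAux.quad_conj V 1 z
    rw [mul_one, hVV] at h1
    rw [Matrix.one_mulVec, Matrix.one_mulVec] at h1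
    exact h1.symm
  have hpr2_eq : pr2 = pr := by
    have h1 : (pr2 : ℂ) = (pr : ℂ) := by
      rw [← dot_self w, hww, hzz, hPx]
    exact_mod_cast h1
  have hQx : star x ⬝ᵥ ((B * Tc⁻¹ * B) *ᵥ x) = (qr : ℂ) := by
    have h1 : (B * Tc⁻¹ * B) *ᵥ x = B *ᵥ (Tc⁻¹ *ᵥ z) := by
      rw [hz_def, Matrix.mulVec_mulVec, Matrix.mulVec_mulVec]
    rw [h1, Matrix.dotProduct_mulVec, ← hstarz, hTinvDec, LHSSAux.quad_conj,
      LHSSAux.diag_quad]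
    rw [hqr_def, Complex.ofReal_sum]
    push_cast
    rfl
  -- the key scalar identity
  have hkey : μ * (Nr : ℂ) = (pr : ℂ) + c * (qr : ℂ) := by
    have h1 : star x ⬝ᵥ (H *ᵥ x) = μ * (Nr : ℂ) := by
      rw [hxe, dotProduct_smul, hxx, smul_eq_mul]
    rw [hH_def] at h1
    rw [Matrix.add_mulVec, Matrix.smul_mulVec, dotProduct_add, dotProduct_smul,
      hPx, hQx, smul_eq_mul] at h1
    exact h1.symm
  -- real bounds
  have hNr_pos : 0 < Nr := by
    obtain ⟨i, hi⟩ := Function.ne_iff.1 hx0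
    refine Finset.sum_pos' (fun i _ => Complex.normSq_nonneg _) ⟨i, Finset.mem_univ i, ?_⟩
    exact Complex.normSq_pos.2 hi
  have hpr_nonneg : 0 ≤ pr := by
    refine Finset.sum_nonneg fun j _ => ?_
    exact mul_nonneg (div_nonneg (hd_pos j).le (had_pos j).le) (Complex.normSq_nonneg _)
  have hNu : ∑ j, Complex.normSq (u j) = Nr := by
    have h1 := LHSSAux.quad_conj U 1 x
    rw [mul_one, hUU] at h1
    rw [Matrix.one_mulVec, Matrix.one_mulVec] at h1
    have h3 : ((∑ j, Complex.normSq (u j) : ℝ) : ℂ) = ((Nr : ℝ) : ℂ) := by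
      rw [← dot_self u, ← h1, hxx]
    exact_mod_cast h3
  have hpr_le : pr * (α + lamMax) ≤ lamMax * Nr := by
    rw [← hNu, Finset.mul_sum, hpr_def, Finset.sum_mul]
    refine Finset.sum_le_sum fun j _ => ?_
    rw [show g j * Complex.normSq (u j) * (α + lamMax)
        = (g j * (α + lamMax)) * Complex.normSq (u j) by ring]
    refine mul_le_mul_of_nonneg_right ?_ (Complex.normSq_nonneg _)
    rw [hg_def]
    rw [div_mul_eq_mul_div, div_le_iff₀ (had_pos j)]
    nlinarith [hd_le j, hd_pos j, hα, hlam_pos]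
  have hqr_abs : muMin * |qr| ≤ pr := by
    rw [← hpr2_eq]
    have h1 : |qr| ≤ muMin⁻¹ * pr2 := by
      rw [hqr_def]
      calc |∑ j, (t j)⁻¹ * Complex.normSq (w j)|
          ≤ ∑ j, |(t j)⁻¹ * Complex.normSq (w j)| := Finset.abs_sum_le_sum_abs _ _
        _ ≤ ∑ j, muMin⁻¹ * Complex.normSq (w j) := by
            refine Finset.sum_le_sum fun j _ => ?_
            rw [abs_mul, abs_inv, abs_of_nonneg (Complex.normSq_nonneg _)]
            refine mul_le_mul_of_nonneg_right ?_ (Complex.normSq_nonneg _)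
            exact inv_anti₀ hmu_pos (ht_ge j)
        _ = muMin⁻¹ * pr2 := by rw [hpr2_def, Finset.mul_sum]
    calc muMin * |qr| ≤ muMin * (muMin⁻¹ * pr2) :=
          mul_le_mul_of_nonneg_left h1 hmu_pos.le
      _ = pr2 := by field_simp
  -- modulus computation
  have habs : Complex.normSq μ * Nr ^ 2 = pr ^ 2 + (α * qr) ^ 2 := by
    have h1 : Complex.normSq (μ * (Nr : ℂ)) = Complex.normSq μ * Nr ^ 2 := by
      rw [Complex.normSq_mul, Complex.normSq_ofReal, sq]
    have h2 : μ * (Nr : ℂ) = ((pr : ℝ) : ℂ) + ((α * qr : ℝ) : ℂ) * Complex.I := by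
      rw [hkey, hc_def]
      push_cast
      ring
    rw [← h1, h2, Complex.normSq_add_mul_I]
  -- final inequality
  have e1 : muMin ^ 2 * qr ^ 2 ≤ pr ^ 2 := by
    have h0 : (0:ℝ) ≤ muMin * |qr| := by positivity
    have h1 := mul_self_le_mul_self h0 hqr_abs
    nlinarith [h1, sq_abs qr]
  have e2 : pr ^ 2 * (α + lamMax) ^ 2 ≤ lamMax ^ 2 * Nr ^ 2 := by
    nlinarith [hpr_le, hpr_nonneg, hlam_pos, hNr_pos, hα,
      mul_nonneg hpr_nonneg (by linarith : (0:ℝ) ≤ α + lamMax)]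
  have e3 : lamMax ^ 2 * (muMin ^ 2 + α ^ 2) < muMin ^ 2 * (α + lamMax) ^ 2 := by
    have h1 : lamMax ^ 2 ≤ muMin ^ 2 := by nlinarith
    have h2 : (0:ℝ) < muMin ^ 2 * (α * lamMax) := by positivity
    nlinarith [h1, h2, sq_nonneg α]
  have f1 : α ^ 2 * (α + lamMax) ^ 2 * (muMin ^ 2 * qr ^ 2)
      ≤ α ^ 2 * (α + lamMax) ^ 2 * pr ^ 2 :=
    mul_le_mul_of_nonneg_left e1 (by positivity)
  have f2 : (muMin ^ 2 + α ^ 2) * (pr ^ 2 * (α + lamMax) ^ 2)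
      ≤ (muMin ^ 2 + α ^ 2) * (lamMax ^ 2 * Nr ^ 2) :=
    mul_le_mul_of_nonneg_left e2 (by positivity)
  have f3 : lamMax ^ 2 * (muMin ^ 2 + α ^ 2) * Nr ^ 2
      < muMin ^ 2 * (α + lamMax) ^ 2 * Nr ^ 2 :=
    mul_lt_mul_of_pos_right e3 (by positivity)
  have hK : (0:ℝ) < muMin ^ 2 * (α + lamMax) ^ 2 := by positivity
  have hlt : pr ^ 2 + (α * qr) ^ 2 < Nr ^ 2 := by
    have chain : (pr ^ 2 + (α * qr) ^ 2) * (muMin ^ 2 * (α + lamMax) ^ 2)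
        < Nr ^ 2 * (muMin ^ 2 * (α + lamMax) ^ 2) := by nlinarith [f1, f2, f3]
    exact (mul_lt_mul_iff_left₀ hK).mp chain
  have hns : Complex.normSq μ < 1 := by
    have h1 : Complex.normSq μ * Nr ^ 2 < 1 * Nr ^ 2 := by
      rw [habs, one_mul]; exact hlt
    exact (mul_lt_mul_iff_left₀ (by positivity : (0:ℝ) < Nr ^ 2)).mp h1
  have : ‖μ‖ ^ 2 < 1 := by rw [Complex.sq_norm]; exact hns
  nlinarith [norm_nonneg μ]
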